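/- Let a > 0, b > 0 and C > 0. Then lim_{t→∞} (1/t) · log E_{a,b}(C t^a) = C^{1/a}. -/

import Mathlib

open Filter

section MLAux

open Real Nat Filter


lemma gamma_core {x : ℝ} (h1 : 1 ≤ x) (h2 : x ≤ 2) :
    1/2 ≤ Real.Gamma x ∧ Real.Gamma x ≤ 1 := by
  have hx : (0:ℝ) < x := by linarith
  have hpos := Real.Gamma_pos_of_pos hx
  have hconv := Real.convexOn_log_Gamma
  constructor
  · -- 2 = λ x + μ 3, λ = 1/(3-x), μ = (2-x)/(3-x)
    have h3x : (0:ℝ) < 3 - x := by linarith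
    have hlam : (0:ℝ) ≤ 1/(3-x) := by positivity
    have hmu : (0:ℝ) ≤ (2-x)/(3-x) := by
      apply div_nonneg <;> linarith
    have hsum : 1/(3-x) + (2-x)/(3-x) = 1 := by
      field_simp
      ring
    have hcomb : (1/(3-x)) • x + ((2-x)/(3-x)) • (3:ℝ) = 2 := by
      simp only [smul_eq_mul]
      rw [div_mul_eq_mul_div, div_mul_eq_mul_div, ← add_div, div_eq_iff h3x.ne']
      ring
    have := hconv.2 (Set.mem_Ioi.2 hx) (Set.mem_Ioi.2 (by norm_num : (0:ℝ) < 3)) hlam hmu hsum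
    rw [hcomb] at this
    simp only [Function.comp_apply, Real.Gamma_two, Real.log_one] at this
    have hG3 : Real.Gamma 3 = 2 := by
      rw [(by norm_num : (3:ℝ) = 2 + 1), Real.Gamma_add_one (by norm_num), Real.Gamma_two]
      norm_num
    rw [hG3] at this
    -- 0 ≤ λ log Γ x + μ log 2
    have hlog2 : Real.log 2 ≤ 1 := by
      have := Real.log_le_sub_one_of_pos (by norm_num : (0:ℝ) < 2)
      linarith
    simp only [smul_eq_mul] at this
    have hl2 : (0:ℝ) ≤ Real.log 2 := Real.log_nonneg (by norm_num)
    have hmul : 0 ≤ Real.log (Real.Gamma x) + (2-x) * Real.log 2 := by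
      have h := mul_le_mul_of_nonneg_left this h3x.le
      rw [mul_zero] at h
      have : (3-x) * (1/(3-x) * Real.log (Real.Gamma x) + (2-x)/(3-x) * Real.log 2)
          = Real.log (Real.Gamma x) + (2-x) * Real.log 2 := by
        field_simp
      linarith [this ▸ h]
    have hlogx : -(Real.log 2) ≤ Real.log (Real.Gamma x) := by
      nlinarith
    calc (1/2 : ℝ) = Real.exp (-(Real.log 2)) := by
          rw [Real.exp_neg, Real.exp_log] <;> norm_num
      _ ≤ Real.exp (Real.log (Real.Gamma x)) := Real.exp_le_exp.2 hlogx
      _ = Real.Gamma x := Real.exp_log hpos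
  · have hlam : (0:ℝ) ≤ 2 - x := by linarith
    have hmu : (0:ℝ) ≤ x - 1 := by linarith
    have hsum : (2-x) + (x-1) = 1 := by ring
    have hcomb : (2-x) • (1:ℝ) + (x-1) • (2:ℝ) = x := by
      simp [smul_eq_mul]; ring
    have := hconv.2 (Set.mem_Ioi.2 (by norm_num : (0:ℝ) < 1))
      (Set.mem_Ioi.2 (by norm_num : (0:ℝ) < 2)) hlam hmu hsum
    rw [hcomb] at this
    simp only [Function.comp_apply, Real.Gamma_one, Real.Gamma_two, Real.log_one,
      mul_zero, add_zero, smul_eq_mul] at this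
    calc Real.Gamma x = Real.exp (Real.log (Real.Gamma x)) := (Real.exp_log hpos).symm
      _ ≤ Real.exp 0 := Real.exp_le_exp.2 this
      _ = 1 := Real.exp_zero




lemma gamma_shift (n : ℕ) {x : ℝ} (h1 : 1 ≤ x) (h2 : x ≤ 2) :
    (n ! : ℝ)/2 ≤ Real.Gamma (x + n) ∧ Real.Gamma (x + n) ≤ ((n+1)! : ℝ) := by
  induction n with
  | zero => simpa using gamma_core h1 h2
  | succ n ih =>
    have hxn : (0:ℝ) < x + n := by positivity
    have heq : Real.Gamma (x + (n+1 : ℕ)) = (x + n) * Real.Gamma (x + n) := by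
      rw [show (x + (n+1 : ℕ) : ℝ) = (x + n) + 1 by push_cast; ring,
        Real.Gamma_add_one hxn.ne']
    constructor
    · rw [heq]
      have h1' : (n + 1 : ℝ) ≤ x + n := by linarith
      calc ((n+1)! : ℝ)/2 = (n+1) * ((n ! : ℝ)/2) := by
            rw [Nat.factorial_succ]; push_cast; ring
        _ ≤ (x + n) * Real.Gamma (x + n) := by
            apply mul_le_mul (by push_cast; linarith) ih.1 (by positivity) hxn.le
    · rw [heq]
      calc (x + n) * Real.Gamma (x + n) ≤ (n + 2) * ((n+1)! : ℝ) := by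
            apply mul_le_mul (by linarith) ih.2 (Real.Gamma_pos_of_pos hxn).le (by positivity)
        _ = ((n+2)! : ℝ) := by
            rw [show n + 2 = (n+1) + 1 by ring, Nat.factorial_succ (n+1), Nat.factorial_succ n]
            push_cast; ring

lemma gamma_lb {x : ℝ} (hx : 0 < x) :
    ∃ n : ℕ, x ≤ n + 2 ∧ (n ! : ℝ)/2 ≤ Real.Gamma x := by
  rcases lt_or_ge x 1 with h | h
  · refine ⟨0, by norm_num; linarith, ?_⟩
    have hG : Real.Gamma (x + 1) = x * Real.Gamma x := Real.Gamma_add_one hx.ne'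
    have hc := (gamma_core (by linarith : (1:ℝ) ≤ x + 1) (by linarith)).1
    have hpos := Real.Gamma_pos_of_pos hx
    rw [hG] at hc
    simp only [Nat.factorial_zero, Nat.cast_one]
    nlinarith
  · refine ⟨⌊x⌋₊ - 1, ?_, ?_⟩
    · have h1 : 1 ≤ ⌊x⌋₊ := Nat.one_le_floor_iff x |>.2 h
      have := Nat.lt_floor_add_one x
      have hcast : ((⌊x⌋₊ - 1 : ℕ) : ℝ) = (⌊x⌋₊ : ℝ) - 1 := by
        push_cast [Nat.cast_sub h1]; ring
      rw [hcast]; linarith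
    · have h1 : 1 ≤ ⌊x⌋₊ := Nat.one_le_floor_iff x |>.2 h
      have hfl : (⌊x⌋₊ : ℝ) ≤ x := Nat.floor_le (by linarith)
      have hfl2 := Nat.lt_floor_add_one x
      have hcast : ((⌊x⌋₊ - 1 : ℕ) : ℝ) = (⌊x⌋₊ : ℝ) - 1 := by
        push_cast [Nat.cast_sub h1]; ring
      set n := ⌊x⌋₊ - 1 with hn
      have hx' : x = (x - n) + n := by ring
      have := gamma_shift n (x := x - n) (by rw [hcast]; linarith) (by rw [hcast]; linarith)
      rw [← hx'] at this
      exact this.1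

lemma gamma_ub {x : ℝ} (h : 1 ≤ x) :
    ∃ n : ℕ, (n : ℝ) + 1 ≤ x ∧ x ≤ n + 2 ∧ Real.Gamma x ≤ ((n+1)! : ℝ) := by
  have h1 : 1 ≤ ⌊x⌋₊ := Nat.one_le_floor_iff x |>.2 h
  have hfl : (⌊x⌋₊ : ℝ) ≤ x := Nat.floor_le (by linarith)
  have hfl2 := Nat.lt_floor_add_one x
  have hcast : ((⌊x⌋₊ - 1 : ℕ) : ℝ) = (⌊x⌋₊ : ℝ) - 1 := by
    push_cast [Nat.cast_sub h1]; ring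
  refine ⟨⌊x⌋₊ - 1, by rw [hcast]; linarith, by rw [hcast]; linarith, ?_⟩
  set n := ⌊x⌋₊ - 1 with hn
  have hx' : x = (x - n) + n := by ring
  have := gamma_shift n (x := x - n) (by rw [hcast]; linarith) (by rw [hcast]; linarith)
  rw [← hx'] at this
  exact this.2


lemma exp_le_succ_div (m : ℕ) (hm : 1 ≤ m) : Real.exp (1/(m+1) : ℝ) ≤ ((m:ℝ)+1)/m := by
  have hm' : (0:ℝ) < m := by exact_mod_cast hm
  have h := Real.add_one_le_exp (-(1/((m:ℝ)+1)))
  have h2 : (m:ℝ)/((m:ℝ)+1) ≤ (Real.exp ((1:ℝ)/((m:ℝ)+1)))⁻¹ := by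
    rw [← Real.exp_neg]
    have heq : -(1/((m:ℝ)+1)) + 1 = (m:ℝ)/((m:ℝ)+1) := by field_simp; ring
    linarith [heq ▸ h]
  have h3 : Real.exp ((1:ℝ)/((m:ℝ)+1)) * ((m:ℝ)/((m:ℝ)+1)) ≤ 1 := by
    calc Real.exp ((1:ℝ)/((m:ℝ)+1)) * ((m:ℝ)/((m:ℝ)+1))
        ≤ Real.exp ((1:ℝ)/((m:ℝ)+1)) * (Real.exp ((1:ℝ)/((m:ℝ)+1)))⁻¹ :=
          mul_le_mul_of_nonneg_left h2 (Real.exp_pos _).le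
      _ = 1 := mul_inv_cancel₀ (Real.exp_ne_zero _)
  rw [le_div_iff₀ hm']
  have h4 := mul_le_mul_of_nonneg_right h3 (show (0:ℝ) ≤ (m:ℝ)+1 by positivity)
  calc Real.exp ((1:ℝ)/((m:ℝ)+1)) * m
      = Real.exp ((1:ℝ)/((m:ℝ)+1)) * ((m:ℝ)/((m:ℝ)+1)) * ((m:ℝ)+1) := by field_simp
    _ ≤ 1 * ((m:ℝ)+1) := h4
    _ = (m:ℝ)+1 := one_mul _

lemma factorial_le (m : ℕ) (hm : 1 ≤ m) :
    (m ! : ℝ) ≤ Real.exp 1 * m * ((m : ℝ) / Real.exp 1)^m := by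
  induction m with
  | zero => omega
  | succ n ih =>
    rcases Nat.eq_zero_or_pos n with h | hn
    · subst h
      have : Real.exp 1 * ((0:ℕ)+1:ℕ) * (((0:ℕ)+1:ℕ) / Real.exp 1)^((0:ℕ)+1:ℕ) = 1 := by
        push_cast
        field_simp
      rw [this]
      norm_num
    · have ihn := ih hn
      have hnpos : (0:ℝ) < n := by exact_mod_cast hn
      have hkey : (n:ℝ) * ((n:ℝ)/Real.exp 1)^n ≤ (((n:ℝ)+1)/Real.exp 1)^(n+1) := by
        have he : Real.exp 1 ≤ (((n:ℝ)+1)/n)^(n+1) := by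
          have h5 := exp_le_succ_div n hn
          have hp := pow_le_pow_left₀ (Real.exp_nonneg _) h5 (n+1)
          rw [← Real.exp_nat_mul] at hp
          push_cast at hp
          rwa [mul_one_div, div_self (by positivity : ((n:ℝ)+1) ≠ 0)] at hp
        have hepos := Real.exp_pos 1
        rw [div_pow, div_pow, ← mul_div_assoc, div_le_div_iff₀ (by positivity) (by positivity)]
        calc (n:ℝ) * (n:ℝ)^n * Real.exp 1 ^ (n+1)
            = ((n:ℝ)^(n+1) * Real.exp 1 ^ n) * Real.exp 1 := by ring
          _ ≤ ((n:ℝ)^(n+1) * Real.exp 1 ^ n) * (((n:ℝ)+1)/n)^(n+1) := by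
              apply mul_le_mul_of_nonneg_left he (by positivity)
          _ = ((n:ℝ)+1)^(n+1) * Real.exp 1 ^ n := by
              rw [div_pow]
              field_simp
      calc ((n+1)! : ℝ) = ((n:ℝ)+1) * (n ! : ℝ) := by
            rw [Nat.factorial_succ]; push_cast; ring
        _ ≤ ((n:ℝ)+1) * (Real.exp 1 * n * ((n : ℝ) / Real.exp 1)^n) := by
            apply mul_le_mul_of_nonneg_left ihn (by positivity)
        _ = Real.exp 1 * ((n:ℝ)+1) * ((n:ℝ) * ((n:ℝ)/Real.exp 1)^n) := by ring
        _ ≤ Real.exp 1 * ((n:ℝ)+1) * (((n:ℝ)+1)/Real.exp 1)^(n+1) := by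
            apply mul_le_mul_of_nonneg_left hkey (by positivity)
        _ = Real.exp 1 * ((n:ℕ)+1 : ℕ) * (((n:ℕ)+1 : ℕ) / Real.exp 1)^(n+1) := by push_cast; ring




lemma term_bound {a b : ℝ} (ha : 0 < a) (hb : 0 < b) {z w : ℝ} (hz : 0 ≤ z) (hw : 1 ≤ w)
    (k : ℕ) :
    z^k / Real.Gamma (a*k+b) ≤ (2 * Real.exp w * w^((2:ℝ)-b)) * (z / w^a)^k := by
  have hw0 : (0:ℝ) < w := lt_of_lt_of_le one_pos hw
  have hx : (0:ℝ) < a*k+b := by positivity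
  obtain ⟨n, hn2, hnΓ⟩ := gamma_lb hx
  have hΓpos : 0 < Real.Gamma (a*k+b) := Real.Gamma_pos_of_pos hx
  have hfac : (0:ℝ) < (n ! : ℝ) := by exact_mod_cast Nat.factorial_pos n
  have step1 : z^k / Real.Gamma (a*k+b) ≤ z^k / ((n ! : ℝ)/2) :=
    div_le_div_of_nonneg_left (by positivity) (by positivity) hnΓ
  have hwn : (0:ℝ) < w^(n:ℕ) := by positivity
  have step2 : z^k / ((n ! : ℝ)/2) ≤ 2 * z^k * Real.exp w / w^(n:ℕ) := by
    have hinv : ((n ! : ℝ))⁻¹ ≤ Real.exp w / w^(n:ℕ) := by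
      rw [le_div_iff₀ hwn]
      have h := Real.pow_div_factorial_le_exp w hw0.le n
      calc ((n ! : ℝ))⁻¹ * w^(n:ℕ) = w^(n:ℕ) / (n ! : ℝ) := by ring
        _ ≤ Real.exp w := h
    have e1 : z^k/((n ! : ℝ)/2) = (2*z^k) * ((n ! : ℝ))⁻¹ := by
      field_simp
    have e2 : 2*z^k*Real.exp w / w^(n:ℕ) = (2*z^k) * (Real.exp w / w^(n:ℕ)) := by ring
    rw [e1, e2]
    exact mul_le_mul_of_nonneg_left hinv (by positivity)
  have hrn : w^(a*k+b-2) ≤ w^(n:ℕ) := by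
    rw [← Real.rpow_natCast w n]
    exact Real.rpow_le_rpow_of_exponent_le hw (by linarith)
  have hrpos : (0:ℝ) < w^(a*k+b-2) := Real.rpow_pos_of_pos hw0 _
  have step3 : 2 * z^k * Real.exp w / w^(n:ℕ) ≤ 2 * z^k * Real.exp w / w^(a*k+b-2) :=
    div_le_div_of_nonneg_left (by positivity) hrpos hrn
  have hsplit : w^(a*k+b-2) = (w^a)^k * (w^((2:ℝ)-b))⁻¹ := by
    rw [← Real.rpow_neg hw0.le, ← Real.rpow_natCast (w^a) k, ← Real.rpow_mul hw0.le,
      ← Real.rpow_add hw0]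
    ring_nf
  have step4 : 2 * z^k * Real.exp w / w^(a*k+b-2)
      = (2 * Real.exp w * w^((2:ℝ)-b)) * (z / w^a)^k := by
    rw [hsplit, div_pow]
    have h1 : (0:ℝ) < (w^a)^k := by positivity
    have h2 : (0:ℝ) < w^((2:ℝ)-b) := Real.rpow_pos_of_pos hw0 _
    field_simp
  calc z^k / Real.Gamma (a*k+b) ≤ z^k / ((n ! : ℝ)/2) := step1
    _ ≤ 2 * z^k * Real.exp w / w^(n:ℕ) := step2
    _ ≤ 2 * z^k * Real.exp w / w^(a*k+b-2) := step3
    _ = (2 * Real.exp w * w^((2:ℝ)-b)) * (z / w^a)^k := step4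

lemma ML_summable {a b : ℝ} (ha : 0 < a) (hb : 0 < b) {z : ℝ} (hz : 1 ≤ z) :
    Summable (fun k : ℕ => z^k / Real.Gamma (a*k+b)) := by
  set w : ℝ := (2*z)^(1/a) with hwdef
  have h2z : (1:ℝ) ≤ 2*z := by linarith
  have hw : 1 ≤ w := by
    calc (1:ℝ) = (1:ℝ)^(1/a) := (Real.one_rpow _).symm
      _ ≤ (2*z)^(1/a) := Real.rpow_le_rpow (by norm_num) h2z (by positivity)
  have hwa : w^a = 2*z := by
    rw [hwdef, ← Real.rpow_mul (by linarith), one_div_mul_cancel ha.ne', Real.rpow_one]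
  have hr : z / w^a = 2⁻¹ := by
    rw [hwa]; field_simp
  have hsum : Summable (fun k : ℕ => (2 * Real.exp w * w^((2:ℝ)-b)) * ((2:ℝ)⁻¹)^k) :=
    (summable_geometric_of_lt_one (by norm_num) (by norm_num)).mul_left _
  refine Summable.of_nonneg_of_le (fun k => ?_) (fun k => ?_) hsum
  · have hx : (0:ℝ) < a*k+b := by positivity
    have := Real.Gamma_pos_of_pos hx
    positivity
  · have h := term_bound ha hb (by linarith : (0:ℝ) ≤ z) hw k
    rwa [hr] at h

lemma ML_le {a b : ℝ} (ha : 0 < a) (hb : 0 < b) {z w ε : ℝ} (hε : 0 < ε) (hz : 1 ≤ z)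
    (hw : 1 ≤ w) (hwa : w^a = (1+ε)*z) :
    (∑' k : ℕ, z^k / Real.Gamma (a*k+b))
      ≤ 2 * Real.exp w * w^((2:ℝ)-b) * ((1+ε)/ε) := by
  have hz0 : (0:ℝ) < z := by linarith
  have hr : z / w^a = (1+ε)⁻¹ := by
    rw [hwa]
    field_simp
  have hrlt : ((1+ε)⁻¹ : ℝ) < 1 := by
    rw [inv_lt_one_iff₀]; right; linarith
  have hrpos : (0:ℝ) ≤ (1+ε)⁻¹ := by positivity
  calc (∑' k : ℕ, z^k / Real.Gamma (a*k+b))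
      ≤ ∑' k : ℕ, (2 * Real.exp w * w^((2:ℝ)-b)) * ((1+ε)⁻¹)^k := by
        apply Summable.tsum_le_tsum
          (fun k => by simpa [hr] using term_bound ha hb hz0.le hw k)
          (ML_summable ha hb hz)
          ((summable_geometric_of_lt_one hrpos hrlt).mul_left _)
    _ = (2 * Real.exp w * w^((2:ℝ)-b)) * (1 - (1+ε)⁻¹)⁻¹ := by
        rw [tsum_mul_left, tsum_geometric_of_lt_one hrpos hrlt]
    _ = 2 * Real.exp w * w^((2:ℝ)-b) * ((1+ε)/ε) := by
        rw [show (1:ℝ) - (1+ε)⁻¹ = ε/(1+ε) by field_simp; ring, inv_div]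


lemma tendsto_log_linear_div {L : ℝ} (hL : 0 < L) (c : ℝ) :
    Tendsto (fun t : ℝ => Real.log (L*t + c) / t) atTop (nhds 0) := by
  have h1 : Tendsto (fun t : ℝ => L*t + c) atTop atTop :=
    tendsto_atTop_add_const_right _ c (tendsto_id.const_mul_atTop hL)
  have h2 : Tendsto (fun u : ℝ => Real.log u / u) atTop (nhds 0) :=
    Real.isLittleO_log_id_atTop.tendsto_div_nhds_zero
  have h3 : Tendsto (fun t : ℝ => Real.log (L*t+c) / (L*t+c)) atTop (nhds 0) := h2.comp h1
  have h4 : Tendsto (fun t : ℝ => (L*t+c)/t) atTop (nhds L) := by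
    have h5 : Tendsto (fun t : ℝ => L + c*t⁻¹) atTop (nhds (L + c*0)) :=
      tendsto_const_nhds.add (tendsto_inv_atTop_zero.const_mul c)
    rw [show L + c*0 = L by ring] at h5
    apply h5.congr'
    filter_upwards [eventually_gt_atTop 0] with t ht
    field_simp
  have h6 := h3.mul h4
  rw [zero_mul] at h6
  apply h6.congr'
  filter_upwards [h1.eventually_ge_atTop 1, eventually_gt_atTop 0] with t hM ht
  have hM0 : L*t+c ≠ 0 := by linarith
  field_simp

end MLAux

/-- The two-parameter Mittag-Leffler function `E_{a,b}(z) = ∑_{k=0}^∞ z^k / Γ(a k + b)`. -/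
noncomputable def mittagLeffler (a b z : ℝ) : ℝ :=
  ∑' k : ℕ, z ^ k / Real.Gamma (a * k + b)

open Real Nat Filter in
set_option maxHeartbeats 1000000 in
theorem mittagLeffler_log_asymptotics (a b C : ℝ) (ha : 0 < a) (hb : 0 < b) (hC : 0 < C) :
    Tendsto (fun t : ℝ => (1 / t) * Real.log (mittagLeffler a b (C * t ^ a)))
      atTop (nhds (C ^ (1 / a))) := by
  rw [tendsto_order]
  constructor
  · intro c hc
    rw [show (1:ℝ)/a = 1/a from rfl] at hc
    set L := C ^ (1/a) with hLdef
    have hL : 0 < L := Real.rpow_pos_of_pos hC _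
    have hlogL : Real.log L = (1/a) * Real.log C := Real.log_rpow hC _
    set g : ℝ → ℝ := fun t => (L/a)*Real.log C + L - 2/t - Real.log (L*t+(a+b))/t
      - (a+b)*(Real.log (L*t+(a+b))/t) - L*Real.log (L + (a+b)/t) with hgdef
    have hg : Tendsto g atTop (nhds L) := by
      have hA : Tendsto (fun t : ℝ => Real.log (L*t+(a+b))/t) atTop (nhds 0) :=
        tendsto_log_linear_div hL (a+b)
      have h2 : Tendsto (fun t : ℝ => 2/t) atTop (nhds 0) := by
        simpa [div_eq_mul_inv] using tendsto_inv_atTop_zero.const_mul (2:ℝ)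
      have hB : Tendsto (fun t : ℝ => L + (a+b)/t) atTop (nhds L) := by
        have h5 : Tendsto (fun t : ℝ => L + (a+b)*t⁻¹) atTop (nhds (L + (a+b)*0)) :=
          tendsto_const_nhds.add (tendsto_inv_atTop_zero.const_mul (a+b))
        rw [show L + (a+b)*0 = L by ring] at h5
        simpa [div_eq_mul_inv] using h5
      have hlogB : Tendsto (fun t : ℝ => Real.log (L + (a+b)/t)) atTop (nhds (Real.log L)) :=
        ((Real.continuousAt_log hL.ne').tendsto).comp hB
      have hcomb : Tendsto (fun t : ℝ => (L/a)*Real.log C + L - 2/t - Real.log (L*t+(a+b))/t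
          - (a+b)*(Real.log (L*t+(a+b))/t) - L*Real.log (L + (a+b)/t)) atTop
          (nhds ((L/a)*Real.log C + L - 0 - 0 - (a+b)*0 - L*Real.log L)) :=
        ((((tendsto_const_nhds.sub h2).sub hA).sub (hA.const_mul (a+b))).sub
          (hlogB.const_mul L))
      have heq : (L/a)*Real.log C + L - 0 - 0 - (a+b)*0 - L*Real.log L = L := by
        rw [hlogL]; ring
      rw [heq] at hcomb
      exact hcomb
    have hzatTop : Tendsto (fun t : ℝ => C * t^a) atTop atTop :=
      (tendsto_rpow_atTop ha).const_mul_atTop hC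
    have hLt : Tendsto (fun t : ℝ => L*t) atTop atTop := tendsto_id.const_mul_atTop hL
    filter_upwards [hg.eventually_const_lt hc, hzatTop.eventually_ge_atTop 1,
      eventually_ge_atTop (1:ℝ), hLt.eventually_ge_atTop 2] with t hgt hz1 ht1 hLt2
    have ht0 : (0:ℝ) < t := by linarith
    set z := C * t^a with hzdef
    set k := ⌈L*t/a⌉₊ with hkdef
    have hk1 : L*t/a ≤ (k:ℝ) := Nat.le_ceil _
    have hk2 : (k:ℝ) < L*t/a + 1 := Nat.ceil_lt_add_one (by positivity)
    set x := a*(k:ℝ)+b with hxdef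
    have hak : L*t ≤ a*(k:ℝ) := by
      have := mul_le_mul_of_nonneg_left hk1 ha.le
      rwa [show a*(L*t/a) = L*t by field_simp] at this
    have hak2 : a*(k:ℝ) < L*t + a := by
      have := mul_lt_mul_of_pos_left hk2 ha
      rw [mul_add, mul_one, show a*(L*t/a) = L*t by field_simp] at this
      linarith
    set M := L*t+(a+b) with hMdef
    have hx1 : L*t + b ≤ x := by rw [hxdef]; linarith
    have hx2 : x ≤ M := by rw [hxdef, hMdef]; linarith
    have hxge2 : 2 ≤ x := by linarith
    have hM2 : 2 ≤ M := by linarith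
    have hMpos : (0:ℝ) < M := by linarith
    obtain ⟨n, hn1, hn2, hn3⟩ := gamma_ub (by linarith : 1 ≤ x)
    set m := n+1 with hmdef
    have hmcast : ((m:ℕ):ℝ) = (n:ℝ)+1 := by push_cast [hmdef]; ring
    have hm1 : (1:ℝ) ≤ (m:ℝ) := by
      rw [hmcast]
      have : (0:ℝ) ≤ (n:ℝ) := Nat.cast_nonneg n
      linarith
    have hmx : (m:ℝ) ≤ x := by rw [hmcast]; exact hn1
    have hmge : x - 1 ≤ (m:ℝ) := by rw [hmcast]; linarith
    have hmpos : (0:ℝ) < m := by linarith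
    have hΓpos : 0 < Real.Gamma x := Real.Gamma_pos_of_pos (by linarith)
    -- log Gamma upper bound
    have hfac := factorial_le m (by omega)
    have hlΓ : Real.log (Real.Gamma x) ≤ 2 + Real.log M + M*Real.log M - L*t := by
      have hfacpos : (0:ℝ) < (m ! : ℝ) := by exact_mod_cast Nat.factorial_pos m
      have step1 : Real.log (Real.Gamma x) ≤ Real.log (m ! : ℝ) := by
        apply Real.log_le_log hΓpos
        rw [hmdef]
        exact hn3
      have step2 : Real.log (m ! : ℝ) ≤ 1 + Real.log m + (m:ℝ)*(Real.log m - 1) := by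
        calc Real.log (m ! : ℝ) ≤ Real.log (Real.exp 1 * m * ((m : ℝ) / Real.exp 1)^m) :=
              Real.log_le_log hfacpos hfac
          _ = 1 + Real.log m + (m:ℝ)*(Real.log m - 1) := by
              rw [Real.log_mul (by positivity) (by positivity),
                Real.log_mul (Real.exp_ne_zero 1) hmpos.ne', Real.log_exp,
                Real.log_pow, Real.log_div hmpos.ne' (Real.exp_ne_zero 1), Real.log_exp]
      have hlm : Real.log m ≤ Real.log M := Real.log_le_log hmpos (by linarith)
      have hlm0 : (0:ℝ) ≤ Real.log m := Real.log_nonneg hm1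
      have hlM0 : (0:ℝ) ≤ Real.log M := Real.log_nonneg (by linarith)
      have hmlm : (m:ℝ)*Real.log m ≤ M*Real.log M :=
        mul_le_mul (by linarith) hlm hlm0 hMpos.le
      have hmlow : L*t - 1 ≤ (m:ℝ) := by linarith
      nlinarith [hmlm]
    -- single term lower bound
    have hz0 : (0:ℝ) < z := by linarith
    have htermpos : (0:ℝ) < z^k / Real.Gamma x := by positivity
    have hterm : z^k / Real.Gamma x ≤ mittagLeffler a b z := by
      have := Summable.le_tsum (ML_summable ha hb hz1) k (fun j _ => by
        have hx : (0:ℝ) < a*j+b := by positivity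
        have := Real.Gamma_pos_of_pos hx
        positivity)
      simpa only [mittagLeffler] using this
    have hlogML : (L*t/a)*(Real.log C + a*Real.log t) - (2 + Real.log M + M*Real.log M - L*t)
        ≤ Real.log (mittagLeffler a b z) := by
      have h1 : Real.log (z^k / Real.Gamma x) ≤ Real.log (mittagLeffler a b z) :=
        Real.log_le_log htermpos hterm
      have h2 : Real.log (z^k / Real.Gamma x) = k*Real.log z - Real.log (Real.Gamma x) := by
        rw [Real.log_div (by positivity) hΓpos.ne', Real.log_pow]
      have hlogz : Real.log z = Real.log C + a*Real.log t := by
        rw [hzdef, Real.log_mul hC.ne' (by positivity), Real.log_rpow ht0]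
      have h3 : (L*t/a)*(Real.log C + a*Real.log t) ≤ (k:ℝ)*Real.log z := by
        rw [← hlogz]
        exact mul_le_mul_of_nonneg_right hk1 (Real.log_nonneg hz1)
      rw [h2] at h1
      exact le_trans (sub_le_sub h3 hlΓ) h1
    -- assemble
    have hMt : Real.log (L + (a+b)/t) = Real.log M - Real.log t := by
      rw [show L + (a+b)/t = M/t by rw [hMdef]; field_simp, Real.log_div hMpos.ne' ht0.ne']
    have hexpand : g t = (1/t)*((L*t/a)*(Real.log C + a*Real.log t)
        - (2 + Real.log M + M*Real.log M - L*t)) := by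
      rw [hgdef]
      simp only
      rw [hMt, hMdef]
      field_simp
      ring
    have hfin : g t ≤ (1/t) * Real.log (mittagLeffler a b z) := by
      rw [hexpand]
      exact mul_le_mul_of_nonneg_left hlogML (by positivity)
    calc c < g t := hgt
      _ ≤ (1/t) * Real.log (mittagLeffler a b (C * t^a)) := hfin
  · intro c hc
    set L := C ^ (1/a) with hLdef
    have hL : 0 < L := Real.rpow_pos_of_pos hC _
    set c' := (L+c)/2 with hc'def
    have hc'1 : L < c' := by rw [hc'def]; linarith
    have hc'2 : c' < c := by rw [hc'def]; linarith
    have hc'pos : 0 < c' := by linarith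
    set ε := (c'/L)^a - 1 with hεdef
    have hε : 0 < ε := by
      rw [hεdef, sub_pos]
      exact (Real.one_lt_rpow_iff_of_pos (by positivity)).2 (Or.inl ⟨by rw [lt_div_iff₀ hL]; linarith, ha⟩)
    have hc'a : c'^a = (1+ε)*L^a := by
      rw [hεdef]
      have : (c'/L)^a = c'^a / L^a := Real.div_rpow hc'pos.le hL.le a
      rw [this]
      have hLa : (0:ℝ) < L^a := Real.rpow_pos_of_pos hL _
      field_simp
      ring
    have hLaC : L^a = C := by
      rw [hLdef, ← Real.rpow_mul hC.le, one_div_mul_cancel ha.ne', Real.rpow_one]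
    -- limit of the upper bound function
    set K := Real.log 2 + Real.log ((1+ε)/ε) with hKdef
    have hupper : Tendsto (fun t : ℝ => c' + (K + ((2:ℝ)-b)*Real.log (c'*t))/t) atTop (nhds c') := by
      have h1 : Tendsto (fun t : ℝ => Real.log (c'*t + 0) / t) atTop (nhds 0) :=
        tendsto_log_linear_div hc'pos 0
      simp only [add_zero] at h1
      have h2 : Tendsto (fun t : ℝ => K*t⁻¹) atTop (nhds 0) := by
        simpa using tendsto_inv_atTop_zero.const_mul K
      have h3 := (h2.add (h1.const_mul ((2:ℝ)-b))).const_add c'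
      rw [show c' + (0 + ((2:ℝ)-b)*0) = c' by ring] at h3
      apply h3.congr'
      filter_upwards [eventually_gt_atTop 0] with t ht
      field_simp
    have hev := hupper.eventually_lt_const hc'2
    have hzatTop : Tendsto (fun t : ℝ => C * t^a) atTop atTop :=
      (tendsto_rpow_atTop ha).const_mul_atTop hC
    filter_upwards [hev, hzatTop.eventually_ge_atTop 1, eventually_ge_atTop (1:ℝ),
      eventually_ge_atTop (1/c' : ℝ)] with t hht hz1 ht1 htc'
    have ht0 : (0:ℝ) < t := by linarith
    set z := C * t^a with hzdef
    set w := c' * t with hwdef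
    have hw1 : 1 ≤ w := by
      have h := mul_le_mul_of_nonneg_left htc' hc'pos.le
      rw [mul_one_div, div_self hc'pos.ne'] at h
      rw [hwdef]
      exact h
    have hwa : w^a = (1+ε)*z := by
      rw [hwdef, hzdef, Real.mul_rpow hc'pos.le (by positivity), hc'a, hLaC]
      ring
    have hML := ML_le ha hb hε hz1 hw1 hwa
    have hMLpos : 0 < mittagLeffler a b z := by
      have h0 : (0:ℝ) < z^(0:ℕ) / Real.Gamma (a*(0:ℕ)+b) := by
        have hx : (0:ℝ) < a*(0:ℕ)+b := by push_cast; simpa using hb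
        have := Real.Gamma_pos_of_pos hx
        positivity
      calc (0:ℝ) < z^(0:ℕ) / Real.Gamma (a*(0:ℕ)+b) := h0
        _ ≤ mittagLeffler a b z := Summable.le_tsum (ML_summable ha hb hz1) 0 (fun j _ => by
            have hx : (0:ℝ) < a*j+b := by positivity
            have := Real.Gamma_pos_of_pos hx
            positivity)
    have hw0 : (0:ℝ) < w := by linarith
    have hB : Real.log (2 * Real.exp w * w^((2:ℝ)-b) * ((1+ε)/ε))
        = K + w + ((2:ℝ)-b) * Real.log w := by
      have hwb : (0:ℝ) < w^((2:ℝ)-b) := Real.rpow_pos_of_pos hw0 _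
      have hεε : (0:ℝ) < (1+ε)/ε := by positivity
      rw [Real.log_mul (by positivity) hεε.ne', Real.log_mul (by positivity) hwb.ne',
        Real.log_mul (by norm_num) (Real.exp_ne_zero w), Real.log_exp,
        Real.log_rpow hw0, hKdef]
      ring
    have hlogML : Real.log (mittagLeffler a b z) ≤ K + w + ((2:ℝ)-b) * Real.log w := by
      rw [← hB]
      exact Real.log_le_log hMLpos hML
    calc (1/t) * Real.log (mittagLeffler a b (C * t^a))
        ≤ (1/t) * (K + w + ((2:ℝ)-b) * Real.log w) := by
          apply mul_le_mul_of_nonneg_left _ (by positivity)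
          exact hlogML
      _ = c' + (K + ((2:ℝ)-b)*Real.log w) / t := by
          rw [hwdef]
          field_simp
          ring
      _ < c := hht
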